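/- Let H be a complex Hilbert space, let (φ̃_n)_{n≥0} and (Ψ̃_n)_{n≥0} be sequences in H, and let (α_n)_{n≥0} be a strictly increasing sequence of real numbers with α_0 = 0; set ᾱ = sup_n α_n ∈ (0, ∞], α_0! = 1 and α_k! = α_1·α_2···α_k for k ≥ 1. Suppose there exist strictly positive constants A_φ, A_Ψ, r_φ, r_Ψ and strictly positive sequences (M_n(φ)), (M_n(Ψ)) such that M_n(φ)/M_{n+1}(φ) → M(φ) and M_n(Ψ)/M_{n+1}(Ψ) → M(Ψ) as n → ∞ (with M(φ), M(Ψ) ∈ (0, ∞]), and ‖φ̃_n‖ ≤ A_φ·r_φⁿ·M_n(φ), ‖Ψ̃_n‖ ≤ A_Ψ·r_Ψⁿ·M_n(Ψ) for all n ≥ 0. Then, setting ρ = ᾱ·min(1, M(φ)/r_φ, M(Ψ)/r_Ψ), for every z ∈ ℂ with |z| < ρ: the scalar series Σ_{k≥0} |z|^{2k}/(α_k!)² converges (so N(|z|) = (Σ_{k≥0} |z|^{2k}/(α_k!)²)^{−1/2} is well defined), and the vector series Σ_{k≥0} (z^k/α_k!)·φ̃_k and Σ_{k≥0} (z^k/α_k!)·Ψ̃_k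 converge in the norm of H, so that the bi-coherent states φ(z) = N(|z|)·Σ_{k≥0} (z^k/α_k!)·φ̃_k and Ψ(z) = N(|z|)·Σ_{k≥0} (z^k/α_k!)·Ψ̃_k are well-defined elements of H. -/

import Mathlib

open scoped ENNReal

open Filter

noncomputable section

/-- The generalized factorial: `α_0! = 1`, `α_k! = α_1 ⋯ α_k`. -/
def alphaFact (α : ℕ → ℝ) : ℕ → ℝ
  | 0 => 1
  | n + 1 => alphaFact α n * α (n + 1)

lemma alphaFact_pos {α : ℕ → ℝ} (hα : StrictMono α) (hα0 : α 0 = 0) :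
    ∀ n, 0 < alphaFact α n := by
  intro n
  induction n with
  | zero => norm_num [alphaFact]
  | succ k ih =>
    have h : α 0 < α (k + 1) := hα (Nat.succ_pos k)
    rw [hα0] at h
    exact mul_pos ih h

lemma alpha_pos {α : ℕ → ℝ} (hα : StrictMono α) (hα0 : α 0 = 0) (n : ℕ) :
    0 < α (n + 1) := by
  have h : α 0 < α (n + 1) := hα (Nat.succ_pos n)
  rwa [hα0] at h

/-- Key summability lemma: the majorant series `A (c r)^n M n / α_n!` is summable
when `c < ᾱ · Mlim / r`. -/
lemma aux_summable (α : ℕ → ℝ) (hα : StrictMono α) (hα0 : α 0 = 0)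
    (A r : ℝ) (hA : 0 < A) (hr : 0 < r) (M : ℕ → ℝ) (hM : ∀ n, 0 < M n)
    (Mlim : ℝ≥0∞) (hMlim : 0 < Mlim)
    (hlim : Tendsto (fun n => ENNReal.ofReal (M n / M (n + 1))) atTop (nhds Mlim))
    (αbar : ℝ≥0∞) (hαbar : αbar = ⨆ n, ENNReal.ofReal (α n))
    (c : ℝ) (hc : 0 ≤ c)
    (hlt : ENNReal.ofReal c < αbar * (Mlim / ENNReal.ofReal r)) :
    Summable (fun n => A * (c * r) ^ n * M n / alphaFact α n) := by
  have hF := alphaFact_pos hα hα0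
  have hαn := alpha_pos hα hα0
  -- `ofReal ∘ α` tends to `αbar`
  have hmono : Monotone (fun n => ENNReal.ofReal (α n)) :=
    fun a b h => ENNReal.ofReal_le_ofReal (hα.monotone h)
  have hαt : Tendsto (fun n => ENNReal.ofReal (α n)) atTop (nhds αbar) := by
    rw [hαbar]; exact tendsto_atTop_iSup hmono
  have hαt' : Tendsto (fun n => ENNReal.ofReal (α (n + 1))) atTop (nhds αbar) :=
    hαt.comp (tendsto_add_atTop_nat 1)
  have hαbar_ne : αbar ≠ 0 := by
    rw [hαbar]
    intro h
    have h1 : ENNReal.ofReal (α 1) ≤ 0 := h ▸ le_iSup (fun n => ENNReal.ofReal (α n)) 1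
    have h2 : (0:ℝ≥0∞) < ENNReal.ofReal (α 1) := ENNReal.ofReal_pos.mpr (hαn 0)
    exact absurd h1 (not_le.mpr h2)
  have hprod : Tendsto (fun n => ENNReal.ofReal (α (n + 1)) * ENNReal.ofReal (M n / M (n + 1)))
      atTop (nhds (αbar * Mlim)) :=
    ENNReal.Tendsto.mul hαt' (Or.inl hαbar_ne) hlim (Or.inl hMlim.ne')
  -- the strict inequality `ofReal (c*r) < αbar * Mlim`
  have hr0 : ENNReal.ofReal r ≠ 0 := (ENNReal.ofReal_pos.mpr hr).ne'
  have hrT : ENNReal.ofReal r ≠ ∞ := ENNReal.ofReal_ne_top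
  have hsM : ENNReal.ofReal (c * r) < αbar * Mlim := by
    have h1 : ENNReal.ofReal c * ENNReal.ofReal r <
        αbar * (Mlim / ENNReal.ofReal r) * ENNReal.ofReal r :=
      by rw [mul_comm _ (ENNReal.ofReal r), mul_comm _ (ENNReal.ofReal r)]; exact ENNReal.mul_lt_mul_right hr0 hrT hlt
    have h2 : αbar * (Mlim / ENNReal.ofReal r) * ENNReal.ofReal r = αbar * Mlim := by
      rw [mul_assoc, ENNReal.div_mul_cancel hr0 hrT]
    rw [ENNReal.ofReal_mul hc]
    rwa [h2] at h1
  obtain ⟨s, hs0, hcrs, hsα⟩ := ENNReal.lt_iff_exists_real_btwn.mp hsM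
  have hcr_lt_s : c * r < s := (ENNReal.ofReal_lt_ofReal_iff_of_nonneg (mul_nonneg hc hr.le)).mp hcrs
  have hs_pos : 0 < s := lt_of_le_of_lt (mul_nonneg hc hr.le) hcr_lt_s
  have hev : ∀ᶠ n in atTop, s < α (n + 1) * (M n / M (n + 1)) := by
    filter_upwards [hprod.eventually (eventually_gt_nhds hsα)] with n hn
    rw [← ENNReal.ofReal_mul (hαn n).le] at hn
    exact (ENNReal.ofReal_lt_ofReal_iff_of_nonneg hs0).mp hn
  refine summable_of_ratio_norm_eventually_le (r := c * r / s)
    ((div_lt_one hs_pos).mpr hcr_lt_s) ?_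
  filter_upwards [hev] with n hn
  have hFn := hF n
  have hαn1 := hαn n
  have hMn := hM n
  have hMn1 := hM (n + 1)
  have hg0 : (0:ℝ) ≤ A * (c * r) ^ n * M n / alphaFact α n := by positivity
  have hg1 : (0:ℝ) ≤ A * (c * r) ^ (n + 1) * M (n + 1) / alphaFact α (n + 1) := by
    have := hF (n + 1); positivity
  rw [Real.norm_of_nonneg hg1, Real.norm_of_nonneg hg0]
  have hkey : s * M (n + 1) ≤ α (n + 1) * M n := by
    have h := (lt_div_iff₀ hMn1).mp (by rwa [← mul_div_assoc] at hn)
    nlinarith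
  have heq : A * (c * r) ^ (n + 1) * M (n + 1) / alphaFact α (n + 1) =
      (A * (c * r) ^ n * M n / alphaFact α n) *
        ((c * r) * (M (n + 1) / M n) / α (n + 1)) := by
    show A * (c * r) ^ (n + 1) * M (n + 1) / (alphaFact α n * α (n + 1)) = _
    field_simp
    ring
  rw [heq]
  rw [mul_comm (c * r / s) _]
  apply mul_le_mul_of_nonneg_left _ hg0
  rw [div_le_div_iff₀ hαn1 hs_pos]
  have hcr0 : 0 ≤ c * r := mul_nonneg hc hr.le
  have hd : M (n + 1) / M n ≤ α (n + 1) / s := by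
    rw [div_le_div_iff₀ hMn hs_pos]; nlinarith
  calc c * r * (M (n + 1) / M n) * s
      ≤ c * r * (α (n + 1) / s) * s :=
        mul_le_mul_of_nonneg_right (mul_le_mul_of_nonneg_left hd hcr0) hs_pos.le
    _ = c * r * α (n + 1) := by field_simp

theorem stmt16 {H : Type*} [NormedAddCommGroup H] [InnerProductSpace ℂ H]
    [CompleteSpace H]
    (φt Ψt : ℕ → H) (α : ℕ → ℝ)
    (hα : StrictMono α) (hα0 : α 0 = 0)
    (Aφ AΨ rφ rΨ : ℝ)
    (hAφ : 0 < Aφ) (hAΨ : 0 < AΨ) (hrφ : 0 < rφ) (hrΨ : 0 < rΨ)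
    (Mφ MΨ : ℕ → ℝ) (hMφ : ∀ n, 0 < Mφ n) (hMΨ : ∀ n, 0 < MΨ n)
    (Mlimφ MlimΨ : ℝ≥0∞) (hMlimφ : 0 < Mlimφ) (hMlimΨ : 0 < MlimΨ)
    (hlimφ : Filter.Tendsto (fun n => ENNReal.ofReal (Mφ n / Mφ (n + 1)))
      Filter.atTop (nhds Mlimφ))
    (hlimΨ : Filter.Tendsto (fun n => ENNReal.ofReal (MΨ n / MΨ (n + 1)))
      Filter.atTop (nhds MlimΨ))
    (hboundφ : ∀ n, ‖φt n‖ ≤ Aφ * rφ ^ n * Mφ n)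
    (hboundΨ : ∀ n, ‖Ψt n‖ ≤ AΨ * rΨ ^ n * MΨ n)
    -- `ᾱ = sup_n α_n` and the radius `ρ = ᾱ · min(1, M(φ)/r_φ, M(Ψ)/r_Ψ)`,
    -- computed in `[0,∞]`:
    (αbar ρ : ℝ≥0∞)
    (hαbar : αbar = ⨆ n, ENNReal.ofReal (α n))
    (hρ : ρ = αbar *
      min 1 (min (Mlimφ / ENNReal.ofReal rφ) (MlimΨ / ENNReal.ofReal rΨ))) :
    ∀ z : ℂ, ENNReal.ofReal ‖z‖ < ρ →
      Summable (fun j : ℕ => ‖z‖ ^ (2 * j) / alphaFact α j ^ 2) ∧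
      Summable (fun j : ℕ => (z ^ j / (alphaFact α j : ℂ)) • φt j) ∧
      Summable (fun j : ℕ => (z ^ j / (alphaFact α j : ℂ)) • Ψt j) := by
  intro z hz
  set c := ‖z‖ with hcdef
  have hc0 : 0 ≤ c := norm_nonneg z
  have hF := alphaFact_pos hα hα0
  have hαn := alpha_pos hα hα0
  -- bounds on ρ
  have hρ1 : ρ ≤ αbar := by
    rw [hρ]
    calc αbar * min 1 (min (Mlimφ / ENNReal.ofReal rφ) (MlimΨ / ENNReal.ofReal rΨ))
        ≤ αbar * 1 := mul_le_mul_right (min_le_left _ _) αbar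
      _ = αbar := mul_one αbar
  have hρφ : ρ ≤ αbar * (Mlimφ / ENNReal.ofReal rφ) := by
    rw [hρ]
    exact mul_le_mul_right ((min_le_right _ _).trans (min_le_left _ _)) αbar
  have hρΨ : ρ ≤ αbar * (MlimΨ / ENNReal.ofReal rΨ) := by
    rw [hρ]
    exact mul_le_mul_right ((min_le_right _ _).trans (min_le_right _ _)) αbar
  -- scalar series
  have hscalar : Summable (fun j : ℕ => c ^ (2 * j) / alphaFact α j ^ 2) := by
    have hcα : ENNReal.ofReal c < αbar := lt_of_lt_of_le hz hρ1
    obtain ⟨s, hs0, hcs', hsα⟩ := ENNReal.lt_iff_exists_real_btwn.mp hcα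
    have hcs : c < s := (ENNReal.ofReal_lt_ofReal_iff_of_nonneg hc0).mp hcs'
    have hs_pos : 0 < s := lt_of_le_of_lt hc0 hcs
    rw [hαbar, lt_iSup_iff] at hsα
    obtain ⟨n0, hn0⟩ := hsα
    have hsn0 : s < α n0 := by
      by_contra h
      exact absurd (ENNReal.ofReal_le_ofReal (not_lt.mp h)) (not_le.mpr hn0)
    have hrr : (c / s) ^ 2 < 1 := by
      have h1 : c / s < 1 := (div_lt_one hs_pos).mpr hcs
      have h0 : 0 ≤ c / s := div_nonneg hc0 hs_pos.le
      nlinarith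
    refine summable_of_ratio_norm_eventually_le (r := (c / s) ^ 2) hrr ?_
    filter_upwards [eventually_ge_atTop n0] with j hj
    have hsaj : s < α (j + 1) := lt_trans hsn0 (hα (Nat.lt_succ_of_le hj))
    have hFj := hF j
    have hαj := hαn j
    have ha0 : (0:ℝ) ≤ c ^ (2 * j) / alphaFact α j ^ 2 := by positivity
    have ha1 : (0:ℝ) ≤ c ^ (2 * (j + 1)) / alphaFact α (j + 1) ^ 2 := by
      have := hF (j + 1); positivity
    rw [Real.norm_of_nonneg ha1, Real.norm_of_nonneg ha0]
    have heq : c ^ (2 * (j + 1)) / alphaFact α (j + 1) ^ 2 =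
        (c ^ (2 * j) / alphaFact α j ^ 2) * (c / α (j + 1)) ^ 2 := by
      show c ^ (2 * (j + 1)) / (alphaFact α j * α (j + 1)) ^ 2 = _
      rw [show 2 * (j + 1) = 2 * j + 2 by ring, pow_add, mul_pow, div_pow,
        div_mul_div_comm]
    rw [heq, mul_comm ((c / s) ^ 2) _]
    apply mul_le_mul_of_nonneg_left _ ha0
    have h1 : c / α (j + 1) ≤ c / s := by
      apply div_le_div_of_nonneg_left hc0 hs_pos hsaj.le
    have h2 : 0 ≤ c / α (j + 1) := div_nonneg hc0 hαj.le
    nlinarith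
  refine ⟨hscalar, ?_, ?_⟩
  · -- φ series
    have hg := aux_summable α hα hα0 Aφ rφ hAφ hrφ Mφ hMφ Mlimφ hMlimφ hlimφ αbar hαbar c hc0
      (lt_of_lt_of_le hz hρφ)
    apply Summable.of_norm_bounded hg
    intro n
    have hFn := hF n
    have hMn := hMφ n
    have hnorm : ‖(z ^ n / (alphaFact α n : ℂ)) • φt n‖ =
        c ^ n / alphaFact α n * ‖φt n‖ := by
      rw [norm_smul, norm_div, norm_pow,
        Complex.norm_real, Real.norm_of_nonneg hFn.le]
    rw [hnorm]
    calc c ^ n / alphaFact α n * ‖φt n‖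
        ≤ c ^ n / alphaFact α n * (Aφ * rφ ^ n * Mφ n) :=
          mul_le_mul_of_nonneg_left (hboundφ n) (by positivity)
      _ = Aφ * (c * rφ) ^ n * Mφ n / alphaFact α n := by
          rw [mul_pow]; ring
  · -- Ψ series
    have hg := aux_summable α hα hα0 AΨ rΨ hAΨ hrΨ MΨ hMΨ MlimΨ hMlimΨ hlimΨ αbar hαbar c hc0
      (lt_of_lt_of_le hz hρΨ)
    apply Summable.of_norm_bounded hg
    intro n
    have hFn := hF n
    have hMn := hMΨ n
    have hnorm : ‖(z ^ n / (alphaFact α n : ℂ)) • Ψt n‖ =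
        c ^ n / alphaFact α n * ‖Ψt n‖ := by
      rw [norm_smul, norm_div, norm_pow,
        Complex.norm_real, Real.norm_of_nonneg hFn.le]
    rw [hnorm]
    calc c ^ n / alphaFact α n * ‖Ψt n‖
        ≤ c ^ n / alphaFact α n * (AΨ * rΨ ^ n * MΨ n) :=
          mul_le_mul_of_nonneg_left (hboundΨ n) (by positivity)
      _ = AΨ * (c * rΨ) ^ n * MΨ n / alphaFact α n := by
          rw [mul_pow]; ring
end
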